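/- The primitive elements a_{i,l} satisfy: ⟨a_{i,l}, a_{i,c}⟩ = δ_{(l),c} · τ_{i,l} for any composition c with |c| = l, where a_{i,c} = Π_j a_{i,c_j} and τ_{i,l} = ⟨a_{i,l}, a_{i,l}⟩. -/

import Mathlib

/- Setting for the generalized quantum group: `I` is the vertex set of a quiver with loops,
`ω i` the number of loops at `i` (`i` is real iff `ω i = 0`), `e` the symmetric Euler form
with `e i i = 2 - 2 ω i`.  `I_∞ = (I^re × {1}) ∪ (I^im × ℕ_{≥1})` is the set of generators,
`F` is the free `ℚ(v)`-algebra on the generators `E_{i,l}` (`(i,l) ∈ I_∞`), realized as the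
monoid algebra of the free monoid on `I_∞`.  `F ⊗ F` carries the twisted multiplication
`(a⊗b)(c⊗d) = v^{(|b|,|c|)} ac ⊗ bd`, and `δ : F → F ⊗ F` is the algebra morphism with
`δ(E_{i,l}) = Σ_{t+t'=l} v_i^{tt'} E_{i,t} ⊗ E_{i,t'}` (`v_i = v^{(i,i)/2} = v^{1-ω i}`). -/

open scoped Classical

noncomputable section

/-- The base field `ℚ(v)`. -/
abbrev Kv : Type := RatFunc ℚ

/-- The variable `v`. -/
def vq : Kv := RatFunc.X

variable {I : Type} [DecidableEq I]

/-- The index set `I_∞`: pairs `(i,l)` with `l ≥ 1`, and `l = 1` if `i` is real. -/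
def GenI (ω : I → ℕ) : Type := {p : I × ℕ // 1 ≤ p.2 ∧ (ω p.1 = 0 → p.2 = 1)}

/-- The free algebra `F` on the generators `E_ι`, `ι ∈ I_∞`, as a monoid algebra. -/
abbrev FA (ω : I → ℕ) : Type := MonoidAlgebra Kv (FreeMonoid (GenI ω))

/-- The monomial of `F` attached to a word in the generators. -/
def sw (ω : I → ℕ) (w : List (GenI ω)) : FA ω :=
  MonoidAlgebra.single (FreeMonoid.ofList w) (1 : Kv)

/-- The weight (degree in `ℕI`) of a word. -/
def wtw (ω : I → ℕ) (w : List (GenI ω)) : I → ℕ := fun i =>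
  ((w.filter (fun g => g.1.1 = i)).map (fun g => g.1.2)).sum

/-- `F ⊗ F` as a module: formal linear combinations of pairs of words. -/
abbrev TT (ω : I → ℕ) : Type := (List (GenI ω) × List (GenI ω)) →₀ Kv

/-- The Euler pairing `(|u|, |w|)` of the weights of two words. -/
def eWt (ω : I → ℕ) (e : I → I → ℤ) (u w : List (GenI ω)) : ℤ :=
  (u.map (fun g => (w.map (fun g' => (g.1.2 : ℤ) * (g'.1.2 : ℤ) * e g.1.1 g'.1.1)).sum)).sum

/-- The twisted multiplication on `F ⊗ F`:
`(a⊗b)(c⊗d) = v^{(|b|,|c|)} ac ⊗ bd`. -/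
def tmul (ω : I → ℕ) (e : I → I → ℤ) (f h : TT ω) : TT ω :=
  f.sum fun p a => h.sum fun q b =>
    Finsupp.single (p.1 ++ q.1, p.2 ++ q.2) (a * b * vq ^ (eWt ω e p.2 q.1))

/-- The word representing `E_{i,t}` (empty if `t = 0`), built from a generator `g = (i,l)`
with `t ≤ l`. -/
def mkw (ω : I → ℕ) (g : GenI ω) (t : ℕ) (ht : t ≤ g.1.2) : List (GenI ω) :=
  if h1 : 1 ≤ t then
    [⟨(g.1.1, t), h1, fun h0 => le_antisymm (ht.trans_eq (g.2.2 h0)) h1⟩]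
  else []

/-- `δ(E_{i,l}) = Σ_{t+t'=l} v_i^{t t'} E_{i,t} ⊗ E_{i,t'}`, with `v_i = v^{1-ω i}`. -/
def deltaGen (ω : I → ℕ) (g : GenI ω) : TT ω :=
  ∑ t ∈ (Finset.range (g.1.2 + 1)).attach,
    (vq ^ ((1 - (ω g.1.1 : ℤ)) * (t.1 : ℤ) * ((g.1.2 : ℤ) - (t.1 : ℤ)))) •
      Finsupp.single
        (mkw ω g t.1 (Nat.le_of_lt_succ (Finset.mem_range.mp t.2)),
         mkw ω g (g.1.2 - t.1) (Nat.sub_le _ _)) (1 : Kv)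

/-- `δ` on words: the product (in the twisted algebra `F ⊗ F`) of the `δ` of the letters. -/
def deltaWord (ω : I → ℕ) (e : I → I → ℤ) : List (GenI ω) → TT ω
  | [] => Finsupp.single ([], []) 1
  | g :: w => tmul ω e (deltaGen ω g) (deltaWord ω e w)

/-- The comultiplication `δ : F → F ⊗ F` (linear extension). -/
def deltaF (ω : I → ℕ) (e : I → I → ℤ) (c : FA ω) : TT ω :=
  c.coeff.sum fun w a => a • deltaWord ω e (FreeMonoid.toList w)

/-- The axioms of the Hopf pairing `⟨-,-⟩` on `F` attached to the family `ν`: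
`⟨1,1⟩ = 1`; `⟨x,y⟩ = 0` for homogeneous `x, y` of different weights; `⟨E_ι,E_ι⟩ = ν_ι`;
`⟨ab, c⟩ = ⟨a ⊗ b, δ(c)⟩` and `⟨a, bc⟩ = ⟨δ(a), b ⊗ c⟩`, where
`⟨a⊗b, c⊗d⟩ = ⟨a,c⟩⟨b,d⟩`. -/
def PairingAxioms (ω : I → ℕ) (e : I → I → ℤ) (ν : GenI ω → Kv)
    (B : FA ω →ₗ[Kv] FA ω →ₗ[Kv] Kv) : Prop :=
  B 1 1 = 1 ∧
  (∀ w w' : List (GenI ω), wtw ω w ≠ wtw ω w' → B (sw ω w) (sw ω w') = 0) ∧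
  (∀ g : GenI ω, B (sw ω [g]) (sw ω [g]) = ν g) ∧
  (∀ a b c : FA ω,
    B (a * b) c = (deltaF ω e c).sum fun p coeff =>
      coeff * B a (sw ω p.1) * B b (sw ω p.2)) ∧
  (∀ a b c : FA ω,
    B a (b * c) = (deltaF ω e a).sum fun p coeff =>
      coeff * B (sw ω p.1) b * B (sw ω p.2) c)

end
noncomputable section
variable {I : Type} [DecidableEq I]

/-- The generator `E_{i,l}` for an imaginary vertex `i` (`ω i ≥ 1`). -/
def gIm (ω : I → ℕ) (i : I) (him : 1 ≤ ω i) (l : ℕ) (hl : 1 ≤ l) : GenI ω :=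
  ⟨(i, l), hl, fun h0 => absurd (show ω i = 0 from h0) (by omega)⟩

/-- `E_{i,c} = E_{i,c_1} ⋯ E_{i,c_r}` for a composition `c`. -/
def Ecomp (ω : I → ℕ) (i : I) (him : 1 ≤ ω i) (c : List ℕ) (hc : ∀ k ∈ c, 1 ≤ k) :
    FA ω :=
  (c.attach.map fun j => sw ω [gIm ω i him j.1 (hc j.1 j.2)]).prod

/-- `Σ_{k<j} c_k c_j` for a composition `c`. -/
def crossSum (c : List ℕ) : ℕ :=
  ∑ j ∈ Finset.range c.length, ∑ k ∈ Finset.range j, (c.getD k 0) * (c.getD j 0)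
/-- The monomials of `F` supported on the vertex `i` and of weight `l·i`:
they span the graded piece `F[l·i]`. -/
def monomialsDeg (ω : I → ℕ) (i : I) (l : ℕ) : Set (FA ω) :=
  (fun w => sw ω w) ''
    {w : List (GenI ω) | (∀ g ∈ w, g.1.1 = i) ∧ (w.map fun g => g.1.2).sum = l}

/-- The subalgebra of `F` generated by the `E_{i,k}`, `1 ≤ k < l`. -/
def lowerAlg (ω : I → ℕ) (i : I) (him : 1 ≤ ω i) (l : ℕ) : Subalgebra Kv (FA ω) :=
  Algebra.adjoin Kv {x : FA ω | ∃ k : ℕ, ∃ hk : 1 ≤ k, k < l ∧ x = sw ω [gIm ω i him k hk]}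

/-- `⟨a_{i,l}, a_{i,c}⟩ = δ_{(l),c} · τ_{i,l}` for any composition `c` of `l`,
where `a_{i,c} = Π_j a_{i,c_j}` and `τ_{i,l} = ⟨a_{i,l}, a_{i,l}⟩`. -/
theorem pairing_ail_comp {I : Type} [DecidableEq I]
    (ω : I → ℕ) (e : I → I → ℤ) (hsym : ∀ i j, e i j = e j i)
    (hii : ∀ i, e i i = 2 - 2 * (ω i : ℤ))
    (ν : GenI ω → Kv) (B : FA ω →ₗ[Kv] FA ω →ₗ[Kv] Kv)
    (hB : PairingAxioms ω e ν B)
    (i : I) (him : 1 ≤ ω i)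
    (a : ℕ → FA ω)
    (ha : ∀ l : ℕ, ∀ hl : 1 ≤ l,
      a l ∈ Submodule.span Kv (monomialsDeg ω i l) ∧
      a l - sw ω [gIm ω i him l hl] ∈ lowerAlg ω i him l ∧
      ∀ z ∈ lowerAlg ω i him l, B (a l) z = 0) :
    ∀ l : ℕ, 1 ≤ l → ∀ c : List ℕ, (∀ k ∈ c, 1 ≤ k) → c.sum = l →
      B (a l) ((c.map a).prod) = if c = [l] then B (a l) (a l) else 0 := by
  intro l hl c hc hsum
  by_cases hcl : c = [l]
  · subst hcl
    simp
  · rw [if_neg hcl]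
    -- every part of c is < l
    have hlt : ∀ k ∈ c, k < l := by
      match c with
      | [] => simp at hsum; omega
      | [k] =>
        simp at hsum; exact absurd (by rw [hsum]) hcl
      | k1 :: k2 :: rest =>
        intro k hk
        have h1 : 1 ≤ k1 := hc k1 (by simp)
        have h2 : 1 ≤ k2 := hc k2 (by simp)
        have hs : k1 + (k2 + rest.sum) = l := by simpa using hsum
        rcases List.mem_cons.mp hk with rfl | hk
        · omega
        rcases List.mem_cons.mp hk with rfl | hk
        · omega
        have := List.single_le_sum (l := rest) (fun x _ => Nat.zero_le x) k hk
        omega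
    -- hence each a k lies in the lower algebra
    have hmono : ∀ k, k ≤ l → lowerAlg ω i him k ≤ lowerAlg ω i him l := by
      intro k hkl
      apply Algebra.adjoin_mono
      rintro x ⟨k', hk', hlt', rfl⟩
      exact ⟨k', hk', lt_of_lt_of_le hlt' hkl, rfl⟩
    have hmem : ∀ x ∈ c.map a, x ∈ lowerAlg ω i him l := by
      intro x hx
      rcases List.mem_map.mp hx with ⟨k, hk, rfl⟩
      have hk1 : 1 ≤ k := hc k hk
      have hkl : k < l := hlt k hk
      have h1 : a k - sw ω [gIm ω i him k hk1] ∈ lowerAlg ω i him l :=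
        hmono k hkl.le (ha k hk1).2.1
      have h2 : sw ω [gIm ω i him k hk1] ∈ lowerAlg ω i him l :=
        Algebra.subset_adjoin ⟨k, hk1, hkl, rfl⟩
      have := add_mem h1 h2
      simpa using this
    have hprod : (c.map a).prod ∈ lowerAlg ω i him l := list_prod_mem hmem
    exact (ha l hl).2.2 _ hprod
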